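/- Let g : [d] → ℝ and τ : [d] → ℝ be functions such that |g(i) − τ(i)| < ε for all i ∈ [d], and suppose g satisfies the weak β-monotonicity: ((i−j)/d)^{1/β} ≤ c(g(i) − g(j) + δ) for all j < i, with δ ≤ ε and constant c > 0. If i, j ∈ [d] satisfy |i − j| ≥ d·(c'ε)^β for a suitable constant c' depending on c (e.g., c' = 4c), then g(i) < g(j) implies τ(i) < τ(j); that is, τ preserves the ordering of g on all pairs at distance at least d(c'ε)^β. -/
import Mathlib


/-- Order preservation under uniform approximation of a weakly β-monotone score
function: if `|g − τ| < ε` pointwise, `g` is weakly β-monotone with tolerance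
`δ ≤ ε` and constant `c`, and `|i − j| ≥ d(4cε)^β`, then `g(i) < g(j)` implies
`τ(i) < τ(j)`. -/
theorem stmt11 (d : ℕ) (β ε δ c : ℝ)
    (hβ : 0 < β) (hε : 0 < ε) (hc : 0 < c) (hδ : δ ≤ ε)
    (g τ : ℕ → ℝ)
    (happrox : ∀ i, 1 ≤ i → i ≤ d → |g i - τ i| < ε)
    (hmono : ∀ i j : ℕ, 1 ≤ j → j < i → i ≤ d →
      (((i : ℝ) - j) / d) ^ (1 / β) ≤ c * (g i - g j + δ))
    (i j : ℕ) (hi1 : 1 ≤ i) (hid : i ≤ d) (hj1 : 1 ≤ j) (hjd : j ≤ d)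
    (hfar : (d : ℝ) * (4 * c * ε) ^ β ≤ |(i : ℝ) - j|)
    (hg : g i < g j) : τ i < τ j := by
  have hd : (0:ℝ) < d := by
    have h1 : 1 ≤ d := le_trans hi1 hid
    exact_mod_cast Nat.lt_of_lt_of_le Nat.zero_lt_one h1
  have h4 : (0:ℝ) < 4 * c * ε := by positivity
  have key : ∀ a b : ℕ, 1 ≤ b → b < a → a ≤ d →
      (d : ℝ) * (4 * c * ε) ^ β ≤ (a : ℝ) - b → 4 * c * ε ≤ c * (g a - g b + δ) := by
    intro a b hb1 hba had hf
    have hfar' : (4*c*ε)^β ≤ ((a:ℝ) - b)/d := by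
      rw [le_div_iff₀ hd]; linarith
    have h2 : ((4*c*ε)^β)^(1/β) ≤ (((a:ℝ)-b)/d)^(1/β) :=
      Real.rpow_le_rpow (le_of_lt (Real.rpow_pos_of_pos h4 β)) hfar' (by positivity)
    have h3 : ((4*c*ε)^β)^(1/β) = 4*c*ε := by
      rw [← Real.rpow_mul h4.le, mul_one_div_cancel hβ.ne', Real.rpow_one]
    calc 4*c*ε = ((4*c*ε)^β)^(1/β) := h3.symm
      _ ≤ (((a:ℝ)-b)/d)^(1/β) := h2
      _ ≤ c * (g a - g b + δ) := hmono a b hb1 hba had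
  rcases lt_trichotomy i j with hij | hij | hij
  · have hf : (d : ℝ) * (4 * c * ε) ^ β ≤ (j : ℝ) - i := by
      have habs : |(i:ℝ) - j| = (j:ℝ) - i := by
        rw [abs_sub_comm]
        exact abs_of_nonneg (sub_nonneg.mpr (by exact_mod_cast hij.le))
      linarith [hfar, habs.symm.le, habs.le]
    have hk := key j i hi1 hij hjd hf
    have ha := happrox i hi1 hid
    have hb := happrox j hj1 hjd
    rw [abs_lt] at ha hb
    nlinarith
  · subst hij; exact absurd hg (lt_irrefl _)
  · have hf : (d : ℝ) * (4 * c * ε) ^ β ≤ (i : ℝ) - j := by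
      have habs : |(i:ℝ) - j| = (i:ℝ) - j :=
        abs_of_nonneg (sub_nonneg.mpr (by exact_mod_cast hij.le))
      linarith [hfar, habs.le]
    have hk := key i j hj1 hij hid hf
    nlinarith
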